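/- Let H be a pairwise independent family of hash functions from a set D to a set S, and let u,w ∈ Γ^D with Hamming distance Ham(u,w) ≤ K where |S| ≥ 4K. Then for every mismatch index i of (u,w), the probability over h ∼ H that there exists another mismatch index i' ≠ i with h(i') = h(i) is at most 1/4; consequently i is 3/4-recoverable (i.e., with probability at least 3/4, h^{-1}(h(i)) contains i as its unique mismatch index). -/

import Mathlib

open Finset

/-- Let `H` (modelled by a finite uniform randomness space `Ω` and `h : Ω → D → S`) be a
pairwise independent family of hash functions from `D` to `S`, and let `u, w ∈ Γ^D` with
`Ham(u,w) ≤ K` and `|S| ≥ 4K`.  Then for every mismatch index `i` of `(u,w)`: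
the probability that some other mismatch index collides with `i` under `h` is at most
`1/4`, and consequently `i` is `3/4`-recoverable, i.e. with probability at least `3/4`
the class `h⁻¹(h(i))` contains `i` as its unique mismatch index. -/
theorem pairwise_independent_recoverable
    {Ω D S Γ : Type*} [Fintype Ω] [Nonempty Ω] [Fintype D] [DecidableEq D]
    [Fintype S] [DecidableEq S] [DecidableEq Γ]
    (h : Ω → D → S)
    (hpi : ∀ a a' : D, a ≠ a' → ∀ b b' : S,
      ((Finset.univ.filter (fun ω : Ω => h ω a = b ∧ h ω a' = b')).card : ℚ) /
          (Fintype.card Ω) = 1 / ((Fintype.card S : ℚ)) ^ 2)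
    (u w : D → Γ) (K : ℕ)
    (hham : (Finset.univ.filter (fun i : D => u i ≠ w i)).card ≤ K)
    (hS : 4 * K ≤ Fintype.card S)
    (i : D) (hi : u i ≠ w i) :
    ((Finset.univ.filter (fun ω : Ω =>
        ∃ i' : D, i' ≠ i ∧ u i' ≠ w i' ∧ h ω i' = h ω i)).card : ℚ) /
        (Fintype.card Ω) ≤ 1 / 4 ∧
    (3 : ℚ) / 4 ≤
      ((Finset.univ.filter (fun ω : Ω =>
          ∀ i' : D, h ω i' = h ω i → u i' ≠ w i' → i' = i)).card : ℚ) /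
        (Fintype.card Ω) := by
  classical
  have hΩpos : (0:ℚ) < (Fintype.card Ω : ℚ) := by exact_mod_cast Fintype.card_pos
  have hSne : Nonempty S := ⟨h (Classical.arbitrary Ω) i⟩
  have hSpos : (0:ℚ) < (Fintype.card S : ℚ) := by exact_mod_cast Fintype.card_pos
  -- collision probability
  have key : ∀ a : D, a ≠ i →
      ((univ.filter (fun ω : Ω => h ω a = h ω i)).card : ℚ) / (Fintype.card Ω)
        = 1 / (Fintype.card S : ℚ) := by
    intro a ha
    have hcard : (univ.filter (fun ω : Ω => h ω a = h ω i)).card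
        = ∑ b : S, (univ.filter (fun ω : Ω => h ω a = b ∧ h ω i = b)).card := by
      rw [Finset.card_eq_sum_card_fiberwise
        (f := fun ω => h ω i) (t := univ) (fun ω _ => mem_univ _)]
      refine Finset.sum_congr rfl fun b _ => ?_
      congr 1
      ext ω
      simp only [Finset.mem_filter, Finset.mem_univ, true_and]
      constructor
      · rintro ⟨hai, hib⟩; exact ⟨hai.trans hib, hib⟩
      · rintro ⟨hab, hib⟩; exact ⟨hab.trans hib.symm, hib⟩
    rw [hcard]
    push_cast
    rw [Finset.sum_div,
      Finset.sum_congr rfl (fun b _ => hpi a i ha b b),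
      Finset.sum_const, card_univ, nsmul_eq_mul]
    field_simp
  set B := (univ.filter (fun i' : D => u i' ≠ w i')).erase i with hB
  have hBK : (B.card : ℚ) ≤ (K : ℚ) := by
    exact_mod_cast le_trans (Finset.card_erase_le) hham
  have hsub : (univ.filter (fun ω : Ω => ∃ i' : D, i' ≠ i ∧ u i' ≠ w i' ∧ h ω i' = h ω i))
      ⊆ B.biUnion (fun a => univ.filter (fun ω => h ω a = h ω i)) := by
    intro ω hω
    simp only [mem_filter, mem_univ, true_and] at hω
    obtain ⟨i', h1, h2, h3⟩ := hω
    refine Finset.mem_biUnion.2 ⟨i', ?_, ?_⟩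
    · simp [hB, Finset.mem_erase, h1, h2]
    · simp [h3]
  have hKpos : 1 ≤ K := by
    have : 1 ≤ (univ.filter (fun i' : D => u i' ≠ w i')).card :=
      Finset.card_pos.2 ⟨i, by simp [hi]⟩
    omega
  have hfirst : ((univ.filter (fun ω : Ω =>
      ∃ i' : D, i' ≠ i ∧ u i' ≠ w i' ∧ h ω i' = h ω i)).card : ℚ) /
      (Fintype.card Ω) ≤ 1 / 4 := by
    have h1 : ((univ.filter (fun ω : Ω =>
        ∃ i' : D, i' ≠ i ∧ u i' ≠ w i' ∧ h ω i' = h ω i)).card : ℚ)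
        ≤ ∑ a ∈ B, ((univ.filter (fun ω : Ω => h ω a = h ω i)).card : ℚ) := by
      push_cast
      exact_mod_cast (Finset.card_le_card hsub).trans Finset.card_biUnion_le
    have h2 : (∑ a ∈ B, ((univ.filter (fun ω : Ω => h ω a = h ω i)).card : ℚ)) /
        (Fintype.card Ω) = (B.card : ℚ) / (Fintype.card S : ℚ) := by
      rw [Finset.sum_div]
      have : ∀ a ∈ B, ((univ.filter (fun ω : Ω => h ω a = h ω i)).card : ℚ) /
          (Fintype.card Ω) = 1 / (Fintype.card S : ℚ) := by
        intro a haB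
        exact key a (Finset.ne_of_mem_erase haB)
      rw [Finset.sum_congr rfl this, Finset.sum_const, nsmul_eq_mul]
      ring
    have h3 : (B.card : ℚ) / (Fintype.card S : ℚ) ≤ 1/4 := by
      rw [div_le_div_iff₀ hSpos (by norm_num)]
      have h4 : (4 * K : ℚ) ≤ (Fintype.card S : ℚ) := by exact_mod_cast hS
      nlinarith
    calc ((univ.filter (fun ω : Ω =>
        ∃ i' : D, i' ≠ i ∧ u i' ≠ w i' ∧ h ω i' = h ω i)).card : ℚ) / (Fintype.card Ω)
        ≤ (∑ a ∈ B, ((univ.filter (fun ω : Ω => h ω a = h ω i)).card : ℚ)) /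
          (Fintype.card Ω) := by
          apply div_le_div_of_nonneg_right h1 hΩpos.le |>.trans_eq rfl
      _ = (B.card : ℚ) / (Fintype.card S : ℚ) := h2
      _ ≤ 1/4 := h3
  refine ⟨hfirst, ?_⟩
  have hcompl : (univ.filter (fun ω : Ω =>
      ∀ i' : D, h ω i' = h ω i → u i' ≠ w i' → i' = i))
      = univ.filter (fun ω : Ω =>
        ¬ ∃ i' : D, i' ≠ i ∧ u i' ≠ w i' ∧ h ω i' = h ω i) := by
    refine Finset.filter_congr fun ω _ => ?_
    constructor
    · rintro hq ⟨i', h1, h2, h3⟩; exact h1 (hq i' h3 h2)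
    · intro hnp i' h3 h2
      by_contra hne
      exact hnp ⟨i', hne, h2, h3⟩
  rw [hcompl, Finset.filter_not, Finset.card_sdiff_of_subset (Finset.filter_subset _ _)]
  have hle : (univ.filter (fun ω : Ω =>
      ∃ i' : D, i' ≠ i ∧ u i' ≠ w i' ∧ h ω i' = h ω i)).card ≤ Fintype.card Ω := by
    simpa using Finset.card_filter_le univ _
  rw [Finset.card_univ] at *
  push_cast [Nat.cast_sub hle]
  rw [sub_div, div_self (ne_of_gt hΩpos)]
  linarith [hfirst]
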